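/- For every prime number $p$, the polynomial $(x^2 + 3)(x^3 - 19)$ has a root in the field $\mathbb{Q}_p$ of $p$-adic numbers, and it also has a root in $\mathbb{R}$. -/

import Mathlib

open Polynomial

private lemma padic_norm_int_eq_one {p : ℕ} [Fact p.Prime] {k : ℤ} (h : ¬ (p : ℤ) ∣ k) :
    ‖((k : ℤ) : ℤ_[p])‖ = 1 :=
  le_antisymm (PadicInt.norm_le_one _)
    (not_lt.1 fun hl => h ((PadicInt.norm_int_lt_one_iff_dvd k).1 hl))

private lemma padic_sq_root {p : ℕ} [Fact p.Prime] (a : ℤ)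
    (h : ‖(((a ^ 2 + 3 : ℤ)) : ℤ_[p])‖ < ‖(((2 * a : ℤ)) : ℤ_[p])‖ ^ 2) :
    ∃ x : ℚ_[p], x ^ 2 + 3 = 0 := by
  have hh : ‖(X ^ 2 + C 3 : ℤ_[p][X]).eval (a : ℤ_[p])‖ <
      ‖((X ^ 2 + C 3 : ℤ_[p][X]).derivative).eval (a : ℤ_[p])‖ ^ 2 := by
    have e1 : (X ^ 2 + C 3 : ℤ_[p][X]).eval (a : ℤ_[p]) = ((a ^ 2 + 3 : ℤ) : ℤ_[p]) := by
      simp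
    have e2 : ((X ^ 2 + C 3 : ℤ_[p][X]).derivative).eval (a : ℤ_[p])
        = ((2 * a : ℤ) : ℤ_[p]) := by
      simp [derivative_X_pow]
      left; norm_num
    rw [e1, e2]; exact h
  obtain ⟨z, hz, -⟩ := hensels_lemma hh
  refine ⟨(z : ℚ_[p]), ?_⟩
  have hz' : (z ^ 2 + 3 : ℤ_[p]) = 0 := by simpa using hz
  have hc := congrArg (PadicInt.Coe.ringHom (p := p)) hz'
  simp only [map_add, map_sub, map_pow, map_ofNat, map_zero] at hc
  exact hc

private lemma padic_cube_root {p : ℕ} [Fact p.Prime] (a : ℤ)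
    (h : ‖(((a ^ 3 - 19 : ℤ)) : ℤ_[p])‖ < ‖(((3 * a ^ 2 : ℤ)) : ℤ_[p])‖ ^ 2) :
    ∃ x : ℚ_[p], x ^ 3 - 19 = 0 := by
  have hh : ‖(X ^ 3 - C 19 : ℤ_[p][X]).eval (a : ℤ_[p])‖ <
      ‖((X ^ 3 - C 19 : ℤ_[p][X]).derivative).eval (a : ℤ_[p])‖ ^ 2 := by
    have e1 : (X ^ 3 - C 19 : ℤ_[p][X]).eval (a : ℤ_[p]) = ((a ^ 3 - 19 : ℤ) : ℤ_[p]) := by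
      simp
    have e2 : ((X ^ 3 - C 19 : ℤ_[p][X]).derivative).eval (a : ℤ_[p])
        = ((3 * a ^ 2 : ℤ) : ℤ_[p]) := by
      simp [derivative_X_pow]
      left; norm_num
    rw [e1, e2]; exact h
  obtain ⟨z, hz, -⟩ := hensels_lemma hh
  refine ⟨(z : ℚ_[p]), ?_⟩
  have hz' : (z ^ 3 - 19 : ℤ_[p]) = 0 := by simpa using hz
  have hc := congrArg (PadicInt.Coe.ringHom (p := p)) hz'
  simp only [map_add, map_sub, map_pow, map_ofNat, map_zero] at hc
  exact hc

/-- If `p ≡ 1 [MOD 3]` there is an element of `ZMod p` whose square is `-3`. -/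
private lemma exists_sq_neg_three {p : ℕ} [hp : Fact p.Prime] (h1 : p % 3 = 1) :
    ∃ w : ZMod p, w ^ 2 = -3 := by
  obtain ⟨g, hg⟩ := IsCyclic.exists_generator (α := (ZMod p)ˣ)
  have hcard : Nat.card (ZMod p)ˣ = p - 1 := by
    rw [Nat.card_eq_fintype_card, ZMod.card_units_eq_totient, Nat.totient_prime hp.out]
  have horder : orderOf g = p - 1 := by
    rw [orderOf_eq_card_of_forall_mem_zpowers hg, hcard]
  have hge := hp.out.two_le
  have h3dvd : 3 ∣ p - 1 := by omega
  set m : ℕ := (p - 1) / 3 with hm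
  have hm3 : 3 * m = p - 1 := by omega
  have hmpos : 0 < m := by omega
  have hmlt : m < p - 1 := by omega
  set ω : (ZMod p)ˣ := g ^ m with hω
  have hω3 : ω ^ 3 = 1 := by
    rw [hω, ← pow_mul, mul_comm, hm3, ← horder, pow_orderOf_eq_one]
  have hωne : ω ≠ 1 := by
    intro hcon
    have := orderOf_dvd_of_pow_eq_one (hcon : g ^ m = 1)
    rw [horder] at this
    exact absurd (Nat.le_of_dvd hmpos this) (by omega)
  set w : ZMod p := (ω : ZMod p) with hw
  have hw3 : w ^ 3 = 1 := by
    rw [hw, ← Units.val_pow_eq_pow_val, hω3, Units.val_one]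
  have hwne : w ≠ 1 := fun hcon => hωne (Units.ext hcon)
  have hkey : w ^ 2 + w + 1 = 0 := by
    have : (w - 1) * (w ^ 2 + w + 1) = 0 := by
      have : (w - 1) * (w ^ 2 + w + 1) = w ^ 3 - 1 := by ring
      rw [this, hw3, sub_self]
    rcases mul_eq_zero.1 this with h | h
    · exact absurd (sub_eq_zero.1 h) hwne
    · exact h
  refine ⟨2 * w + 1, ?_⟩
  have : (2 * w + 1) ^ 2 = 4 * (w ^ 2 + w + 1) - 3 := by ring
  rw [this, hkey]; ring

/-- For every prime `p`, the polynomial `(x² + 3)(x³ - 19)` has a root in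
`ℚ_p`, and it also has a root in `ℝ`. -/
theorem stmt9 :
    (∀ (p : ℕ) [Fact p.Prime], ∃ x : ℚ_[p], (x ^ 2 + 3) * (x ^ 3 - 19) = 0) ∧
    (∃ x : ℝ, (x ^ 2 + 3) * (x ^ 3 - 19) = 0) := by
  constructor
  · intro p hp
    by_cases hp3 : p = 3
    · -- `19` is a cube in `ℚ_3` : start Hensel at `7`.
      subst hp3
      obtain ⟨x, hx⟩ := padic_cube_root (p := 3) 7 (by
        have h1 : ‖(((7 : ℤ) ^ 3 - 19 : ℤ) : ℤ_[3])‖ ≤ ((3 : ℕ) : ℝ) ^ (-(4 : ℕ) : ℤ) :=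
          PadicInt.norm_int_le_pow_iff_dvd.2 (by norm_num)
        have h2 : ‖(((3 * 7 ^ 2 : ℤ)) : ℤ_[3])‖ = 3⁻¹ := by
          have : ((3 * 7 ^ 2 : ℤ) : ℤ_[3]) = ((3 : ℕ) : ℤ_[3]) * ((49 : ℤ) : ℤ_[3]) := by
            push_cast; ring
          rw [this, norm_mul, PadicInt.norm_p, padic_norm_int_eq_one (by decide)]
          norm_num
        rw [h2]
        calc ‖(((7 : ℤ) ^ 3 - 19 : ℤ) : ℤ_[3])‖ ≤ ((3 : ℕ) : ℝ) ^ (-(4 : ℕ) : ℤ) := h1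
          _ < (3⁻¹ : ℝ) ^ 2 := by norm_num)
      exact ⟨x, by rw [hx, mul_zero]⟩
    · rcases Nat.lt_or_ge (p % 3) 2 with hmod | hmod
      · -- p % 3 = 1 (p ≠ 3, so p % 3 ≠ 0): `-3` is a square in `ℚ_p`.
        have h1 : p % 3 = 1 := by
          rcases Nat.lt_or_ge (p % 3) 1 with h | h
          · have h0 : p % 3 = 0 := by omega
            have hd : (3 : ℕ) ∣ p := Nat.dvd_of_mod_eq_zero h0
            exact absurd ((Nat.prime_dvd_prime_iff_eq (by norm_num) hp.out).1 hd).symm hp3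
          · omega
        obtain ⟨w, hw⟩ := exists_sq_neg_three h1
        set a : ℤ := (w.val : ℤ) with ha
        have hcast : ((a : ℤ) : ZMod p) = w := by
          rw [ha]; push_cast; simp [ZMod.natCast_val, ZMod.cast_id]
        have hdvd : (p : ℤ) ∣ a ^ 2 + 3 := by
          rw [← ZMod.intCast_zmod_eq_zero_iff_dvd]
          push_cast
          rw [hcast, hw]; ring
        have hp2 : p ≠ 2 := by omega
        have hnd : ¬ (p : ℤ) ∣ 2 * a := by
          intro hd
          have h0 : ((2 * a : ℤ) : ZMod p) = 0 := (ZMod.intCast_zmod_eq_zero_iff_dvd _ _).2 hd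
          push_cast at h0
          rw [hcast] at h0
          have h2ne : (2 : ZMod p) ≠ 0 := by
            intro hc
            have : ((2 : ℕ) : ZMod p) = 0 := by exact_mod_cast hc
            rw [ZMod.natCast_eq_zero_iff] at this
            exact hp2 ((Nat.prime_dvd_prime_iff_eq hp.out (by norm_num)).1 this)
          have hw0 : w = 0 := by
            rcases mul_eq_zero.1 h0 with h | h
            · exact absurd h h2ne
            · exact h
          rw [hw0] at hw
          have h30 : (3 : ZMod p) = 0 := by
            have : (0 : ZMod p) = -3 := by rw [← hw]; ring
            linear_combination this
          have : ((3 : ℕ) : ZMod p) = 0 := by exact_mod_cast h30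
          rw [ZMod.natCast_eq_zero_iff] at this
          exact hp3 ((Nat.prime_dvd_prime_iff_eq hp.out (by norm_num)).1 this)
        obtain ⟨x, hx⟩ := padic_sq_root (p := p) a (by
          rw [padic_norm_int_eq_one hnd]
          calc ‖((a ^ 2 + 3 : ℤ) : ℤ_[p])‖ < 1 := (PadicInt.norm_int_lt_one_iff_dvd _).2 hdvd
            _ = 1 ^ 2 := by norm_num)
        exact ⟨x, by rw [hx, zero_mul]⟩
      · -- p % 3 = 2 : `19` is a cube in `ℚ_p`.
        have h2 : p % 3 = 2 := by
          have : p % 3 < 3 := Nat.mod_lt p (by norm_num)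
          omega
        have hp19 : p ≠ 19 := by intro h; rw [h] at h2; norm_num at h2
        have h19ne : (19 : ZMod p) ≠ 0 := by
          intro hc
          have : ((19 : ℕ) : ZMod p) = 0 := by exact_mod_cast hc
          rw [ZMod.natCast_eq_zero_iff] at this
          exact hp19 ((Nat.prime_dvd_prime_iff_eq hp.out (by norm_num)).1 this)
        set k : ℕ := 2 * (p / 3) + 1 with hk
        have h3k : 3 * k = 2 * (p - 1) + 1 := by omega
        set b : ZMod p := (19 : ZMod p) ^ k with hb
        have hb3 : b ^ 3 = 19 := by
          have hone : (19 : ZMod p) ^ (p - 1) = 1 := ZMod.pow_card_sub_one_eq_one h19ne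
          have hke : k * 3 = (p - 1) * 2 + 1 := by omega
          rw [hb, ← pow_mul, hke, pow_succ, pow_mul, hone, one_pow, one_mul]
        have hbne : b ≠ 0 := by
          intro hc
          rw [hc] at hb3
          exact h19ne (by rw [← hb3]; ring)
        set a : ℤ := (b.val : ℤ) with ha
        have hcast : ((a : ℤ) : ZMod p) = b := by
          rw [ha]; push_cast; simp [ZMod.natCast_val, ZMod.cast_id]
        have hdvd : (p : ℤ) ∣ a ^ 3 - 19 := by
          rw [← ZMod.intCast_zmod_eq_zero_iff_dvd]
          push_cast
          rw [hcast, hb3]; ring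
        have hnd : ¬ (p : ℤ) ∣ 3 * a ^ 2 := by
          intro hd
          have h0 : ((3 * a ^ 2 : ℤ) : ZMod p) = 0 := (ZMod.intCast_zmod_eq_zero_iff_dvd _ _).2 hd
          push_cast at h0
          rw [hcast] at h0
          have h3ne : (3 : ZMod p) ≠ 0 := by
            intro hc
            have : ((3 : ℕ) : ZMod p) = 0 := by exact_mod_cast hc
            rw [ZMod.natCast_eq_zero_iff] at this
            have := (Nat.prime_dvd_prime_iff_eq hp.out (by norm_num)).1 this
            omega
          rcases mul_eq_zero.1 h0 with h | h
          · exact h3ne h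
          · exact hbne (sq_eq_zero_iff.1 h)
        obtain ⟨x, hx⟩ := padic_cube_root (p := p) a (by
          rw [padic_norm_int_eq_one hnd]
          calc ‖((a ^ 3 - 19 : ℤ) : ℤ_[p])‖ < 1 := (PadicInt.norm_int_lt_one_iff_dvd _).2 hdvd
            _ = 1 ^ 2 := by norm_num)
        exact ⟨x, by rw [hx, mul_zero]⟩
  · refine ⟨(19 : ℝ) ^ ((1 : ℝ) / 3), ?_⟩
    have h3 : ((19 : ℝ) ^ ((1 : ℝ) / 3)) ^ 3 = 19 := by
      rw [← Real.rpow_natCast ((19 : ℝ) ^ ((1 : ℝ) / 3)) 3, ← Real.rpow_mul (by norm_num)]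
      norm_num
    rw [h3]; ring
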